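/- Let G be a simple graph and v a vertex of G of degree at most 5. Suppose there do NOT exist five distinct neighbors v1, v2, v3, v4, v5 of v together with, for each pair i < j in {1,...,5}, a path P_{ij} in G - v from v_i to v_j, such that: (i) the ten paths P_{ij} are pairwise edge-disjoint; (ii) whenever {i,j} and {k,l} are disjoint pairs, the paths P_{ij} and P_{kl} are vertex-disjoint; and (iii) for every k not in {i,j}, the path P_{ij} avoids the vertex v_k (and all paths avoid v). If the vertex-deleted subgraph G - v is 5-colorable, then G is 5-colorable. -/

import Mathlib

/-- A `v`-immersion of `K₆` into `G`: five distinct neighbors of `v` together with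
paths between them in `G - v` (paths avoiding `v`) that are pairwise edge-disjoint,
vertex-disjoint when the index pairs are disjoint, and each avoiding the branch
vertices not among its own endpoints. -/
def VImmersionK6 {V : Type*} (G : SimpleGraph V) (v : V) : Prop :=
  ∃ f : Fin 5 → V, Function.Injective f ∧ (∀ i, G.Adj v (f i)) ∧
    ∃ P : ∀ i j : Fin 5, G.Walk (f i) (f j),
      (∀ i j, i ≠ j → (P i j).IsPath) ∧
      (∀ i j, i ≠ j → v ∉ (P i j).support) ∧
      (∀ i j k, i ≠ j → k ≠ i → k ≠ j → f k ∉ (P i j).support) ∧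
      (∀ i j k l, i ≠ j → k ≠ l → ({i, j} : Finset (Fin 5)) ≠ {k, l} →
        ∀ e ∈ (P i j).edges, e ∉ (P k l).edges) ∧
      (∀ i j k l, i ≠ j → k ≠ l →
        Disjoint ({i, j} : Finset (Fin 5)) ({k, l} : Finset (Fin 5)) →
        ∀ x ∈ (P i j).support, x ∉ (P k l).support)

/-- The "Kempe graph": subgraph of `G` on vertices `≠ v` colored `a` or `b`. -/
def KG {V : Type*} (G : SimpleGraph V) (v : V) (c : V → Fin 5) (a b : Fin 5) :
    SimpleGraph V where
  Adj x y := G.Adj x y ∧ x ≠ v ∧ y ≠ v ∧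
    c x ∈ ({a, b} : Finset (Fin 5)) ∧ c y ∈ ({a, b} : Finset (Fin 5))
  symm := ⟨fun x y ⟨h1, h2, h3, h4, h5⟩ => ⟨h1.symm, h3, h2, h5, h4⟩⟩
  loopless := ⟨fun x hx => G.loopless.irrefl x hx.1⟩

lemma KG_support {V : Type*} {G : SimpleGraph V} {v : V} {c : V → Fin 5} {a b : Fin 5}
    {u w : V} (W : (KG G v c a b).Walk u w)
    (hu : u ≠ v ∧ c u ∈ ({a, b} : Finset (Fin 5))) :
    ∀ x ∈ W.support, x ≠ v ∧ c x ∈ ({a, b} : Finset (Fin 5)) := by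
  induction W with
  | nil => intro x hx; simp only [SimpleGraph.Walk.support_nil, List.mem_singleton] at hx
           exact hx ▸ hu
  | cons h W ih =>
    intro x hx
    rw [SimpleGraph.Walk.support_cons, List.mem_cons] at hx
    rcases hx with rfl | hx
    · exact ⟨h.2.1, h.2.2.2.1⟩
    · exact ih ⟨h.2.2.1, h.2.2.2.2⟩ x hx

lemma ext_col {V : Type*} (G : SimpleGraph V) (v : V) (c : V → Fin 5)
    (hc : ∀ x y, x ≠ v → y ≠ v → G.Adj x y → c x ≠ c y)
    (a : Fin 5) (ha : ∀ u, G.Adj v u → c u ≠ a) :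
    G.Colorable 5 := by
  classical
  refine ⟨SimpleGraph.Coloring.mk (fun u => if u = v then a else c u) ?_⟩
  intro x y hxy
  by_cases hx : x = v
  · have hxy' : G.Adj v y := by rw [← hx]; exact hxy
    have hy : y ≠ v := (G.ne_of_adj hxy').symm
    rw [if_pos hx, if_neg hy]
    exact (ha y hxy').symm
  · by_cases hy : y = v
    · have hxy' : G.Adj v x := by rw [← hy]; exact hxy.symm
      rw [if_neg hx, if_pos hy]
      exact ha x hxy'
    · rw [if_neg hx, if_neg hy]
      exact hc x y hx hy hxy

lemma pair_eq_of_mem {p q i j : Fin 5} (hpq : p ≠ q)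
    (hp : p ∈ ({i, j} : Finset (Fin 5))) (hq : q ∈ ({i, j} : Finset (Fin 5))) :
    ({i, j} : Finset (Fin 5)) = {p, q} := by
  revert hpq hp hq; revert p q i j; decide

theorem stmt0 {V : Type*} (G : SimpleGraph V) (v : V)
    [Fintype (G.neighborSet v)]
    (hdeg : G.degree v ≤ 5)
    (h : ¬ VImmersionK6 G v)
    (hcol : (G.induce {u | u ≠ v}).Colorable 5) :
    G.Colorable 5 := by
  classical
  obtain ⟨C⟩ := hcol
  set c : V → Fin 5 := fun u => if hu : u = v then 0 else C ⟨u, hu⟩ with hcdef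
  have hc : ∀ x y, x ≠ v → y ≠ v → G.Adj x y → c x ≠ c y := by
    intro x y hx hy hxy
    simpa [hcdef, hx, hy] using C.valid (show (G.induce {u | u ≠ v}).Adj ⟨x, hx⟩ ⟨y, hy⟩ from hxy)
  by_cases hfree : ∃ a : Fin 5, ∀ u, G.Adj v u → c u ≠ a
  · obtain ⟨a, ha⟩ := hfree
    exact ext_col G v c hc a ha
  · push_neg at hfree
    -- every color appears on a neighbor; choose representatives
    choose f hf1 hf2 using hfree
    have hfinj : Function.Injective f := fun i j hij => by
      rw [← hf2 i, ← hf2 j, hij]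
    have hfne : ∀ i, f i ≠ v := fun i => (G.ne_of_adj (hf1 i)).symm
    -- every neighbor is one of the f i
    have hrange : ∀ u, G.Adj v u → u = f (c u) := by
      intro u hu
      have hsub : Finset.image f Finset.univ ⊆ G.neighborFinset v := by
        intro x hx
        simp only [Finset.mem_image] at hx
        obtain ⟨i, _, rfl⟩ := hx
        exact (SimpleGraph.mem_neighborFinset _ _ _).2 (hf1 i)
      have hcard : (G.neighborFinset v).card ≤ (Finset.image f Finset.univ).card := by
        rw [Finset.card_image_of_injective _ hfinj, Finset.card_univ, Fintype.card_fin]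
        simpa [SimpleGraph.card_neighborFinset_eq_degree] using hdeg
      have heq := Finset.eq_of_subset_of_card_le hsub hcard
      have hu' : u ∈ Finset.image f Finset.univ := by
        rw [heq]; exact (SimpleGraph.mem_neighborFinset _ _ _).2 hu
      simp only [Finset.mem_image] at hu'
      obtain ⟨i, _, rfl⟩ := hu'
      rw [hf2 i]
    by_cases hreach : ∀ i j : Fin 5, (KG G v c i j).Reachable (f i) (f j)
    · -- build a v-immersion of K6, contradiction
      exfalso; apply h
      refine ⟨f, hfinj, hf1, ?_⟩
      have hKle : ∀ a b : Fin 5, KG G v c a b ≤ G := fun a b x y hxy => hxy.1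
      have hE : ∀ (i j : Fin 5) (Wk : (KG G v c i j).Walk (f i) (f j)),
          ∀ e ∈ Wk.edges, e ∈ G.edgeSet := fun i j Wk e he =>
        SimpleGraph.edgeSet_mono (hKle i j) (Wk.edges_subset_edgeSet he)
      set W : ∀ i j : Fin 5, (KG G v c i j).Walk (f i) (f j) :=
        fun i j => (hreach i j).some with hWdef
      set P : ∀ i j : Fin 5, G.Walk (f i) (f j) :=
        fun i j => (((W i j).transfer G (hE i j (W i j))).toPath : G.Walk (f i) (f j))
        with hPdef
      have hsupp : ∀ i j : Fin 5, ∀ x ∈ (P i j).support,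
          x ≠ v ∧ c x ∈ ({i, j} : Finset (Fin 5)) := by
        intro i j x hx
        have hx' : x ∈ (W i j).support := by
          have := SimpleGraph.Walk.support_toPath_subset ((W i j).transfer G (hE i j (W i j))) hx
          rwa [SimpleGraph.Walk.support_transfer] at this
        exact KG_support (W i j) ⟨hfne i, by simp [hf2 i]⟩ x hx'
      have hedge : ∀ i j : Fin 5, ∀ e ∈ (P i j).edges, e ∈ (KG G v c i j).edgeSet := by
        intro i j e he
        have := SimpleGraph.Walk.edges_toPath_subset ((W i j).transfer G (hE i j (W i j))) he
        rw [SimpleGraph.Walk.edges_transfer] at this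
        exact (W i j).edges_subset_edgeSet this
      refine ⟨P, ?_, ?_, ?_, ?_, ?_⟩
      · intro i j _
        exact ((W i j).transfer G (hE i j (W i j))).toPath.2
      · intro i j _ hv
        exact (hsupp i j v hv).1 rfl
      · intro i j k hij hki hkj hk
        have := (hsupp i j (f k) hk).2
        rw [hf2 k] at this
        simp only [Finset.mem_insert, Finset.mem_singleton] at this
        rcases this with h' | h'
        · exact hki h'
        · exact hkj h'
      · intro i j k l hij hkl hne e he1 he2
        have h1 := hedge i j e he1
        have h2 := hedge k l e he2
        revert h1 h2
        refine Sym2.ind (fun x y h1 h2 => ?_) e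
        rw [SimpleGraph.mem_edgeSet] at h1 h2
        obtain ⟨hadj, hx, hy, hcx, hcy⟩ := h1
        obtain ⟨_, _, _, hcx', hcy'⟩ := h2
        have hxy : c x ≠ c y := hc x y hx hy hadj
        exact hne ((pair_eq_of_mem hxy hcx hcy).trans (pair_eq_of_mem hxy hcx' hcy').symm)
      · intro i j k l hij hkl hdisj x hx1 hx2
        have h1 := (hsupp i j x hx1).2
        have h2 := (hsupp k l x hx2).2
        exact Finset.disjoint_left.1 hdisj h1 h2
    · push_neg at hreach
      obtain ⟨a, b, hnr⟩ := hreach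
      set Reach : V → Prop := fun u => (KG G v c a b).Reachable (f a) u with hRdef
      have hmemR : ∀ u, Reach u → c u ∈ ({a, b} : Finset (Fin 5)) := by
        intro u hu
        obtain ⟨Wu⟩ := hu
        exact (KG_support Wu ⟨hfne a, by simp [hf2 a]⟩ u Wu.end_mem_support).2
      have hneR : ∀ u, Reach u → u ≠ v := by
        intro u hu
        obtain ⟨Wu⟩ := hu
        exact (KG_support Wu ⟨hfne a, by simp [hf2 a]⟩ u Wu.end_mem_support).1
      set c' : V → Fin 5 := fun u => if Reach u then Equiv.swap a b (c u) else c u with hc'def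
      have hab : a ≠ b := by
        intro hab
        exact hnr (hab ▸ SimpleGraph.Reachable.refl (f a))
      apply ext_col G v c' ?_ a ?_
      · -- properness away from v
        intro x y hx hy hxy
        by_cases hRx : Reach x <;> by_cases hRy : Reach y <;>
          simp only [hc'def, hRx, hRy, if_true, if_false, if_pos, if_neg, not_false_iff]
        · exact (Equiv.swap a b).injective.ne (hc x y hx hy hxy)
        · intro hcon
          apply hRy
          have hcy : c y ∈ ({a, b} : Finset (Fin 5)) := by
            have := hmemR x hRx
            rw [← hcon]
            simp only [Finset.mem_insert, Finset.mem_singleton] at this ⊢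
            rcases this with h' | h' <;> simp [h', Equiv.swap_apply_left, Equiv.swap_apply_right]
          exact hRx.trans (SimpleGraph.Adj.reachable ⟨hxy, hx, hy, hmemR x hRx, hcy⟩)
        · intro hcon
          apply hRx
          have hcx : c x ∈ ({a, b} : Finset (Fin 5)) := by
            have := hmemR y hRy
            rw [hcon]
            simp only [Finset.mem_insert, Finset.mem_singleton] at this ⊢
            rcases this with h' | h' <;> simp [h', Equiv.swap_apply_left, Equiv.swap_apply_right]
          exact hRy.trans (SimpleGraph.Adj.reachable
            ((KG G v c a b).adj_symm ⟨hxy, hx, hy, hcx, hmemR y hRy⟩))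
        · exact hc x y hx hy hxy
      · -- color a is free at v
        intro u hu
        by_cases hRu : Reach u <;> simp only [hc'def, hRu, if_true, if_false]
        · have hcu := hmemR u hRu
          simp only [Finset.mem_insert, Finset.mem_singleton] at hcu
          rcases hcu with h' | h'
          · simp [h', Equiv.swap_apply_left, hab.symm]
          · exfalso
            apply hnr
            have : u = f b := by rw [hrange u hu, h']
            exact this ▸ hRu
        · intro hcon
          apply hRu
          have : u = f a := by rw [hrange u hu, hcon]
          exact this ▸ SimpleGraph.Reachable.refl (f a)
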